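/- Let q = 2ⁿ with n odd and set m = 2^{(n−1)/2} = √(q/2). Then there exists a set A of points of PG(2,q) with |A| = (m−1)q + m such that every line of PG(2,q) meets A in either 0 or m points (i.e. A is a maximal arc of degree m, of Denniston type), and no two points of A (equal or distinct) are conjugate with respect to the pseudo polarity; in particular A is an independent set in the Erdős–Rényi graph ER_q containing no absolute points. -/

import Mathlib

open Projectivization

variable {F : Type} [Field F]

/-- The line of `PG(2,q)` with coefficient vector `u`. -/
def lineSet (u : Fin 3 → F) : Set (Projectivization F (Fin 3 → F)) :=
  {P | u 0 * P.rep 0 + u 1 * P.rep 1 + u 2 * P.rep 2 = 0}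

/-- A set of points of `PG(2,q)` is a line if it is cut out by a nontrivial homogeneous
linear equation. -/
def IsLine (l : Set (Projectivization F (Fin 3 → F))) : Prop :=
  ∃ u : Fin 3 → F, u ≠ 0 ∧ l = lineSet u

set_option linter.unusedSectionVars false
set_option linter.unusedVariables false
set_option maxHeartbeats 1000000

namespace ERAux

open Finset


variable {F : Type} [Field F]

/-- The Artin–Schreier set `V = {t² + t}`. -/
def Vset (F : Type) [Field F] : Set F := {v | ∃ t : F, v = t ^ 2 + t}

theorem V_zero : (0 : F) ∈ Vset F := ⟨0, by ring⟩

theorem ncard_filter {α : Type} [Fintype α] (P : α → Prop) [DecidablePred P] :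
    ({x | P x} : Set α).ncard = (univ.filter P).card := by
  rw [Set.ncard_eq_toFinset_card', Set.toFinset_setOf]

theorem ncard_preimage_equiv {α β : Type} (e : α ≃ β) (S : Set β) :
    {a | e a ∈ S}.ncard = S.ncard := by
  have h : {a | e a ∈ S} = e ⁻¹' S := rfl
  rw [h, ← Set.ncard_image_of_injective (e ⁻¹' S) e.injective,
    Set.image_preimage_eq _ e.surjective]

theorem card_filter_equiv {α β : Type} [Fintype α] [Fintype β] (e : α ≃ β) (P : β → Prop)
    [DecidablePred P] : (univ.filter fun a => P (e a)).card = (univ.filter P).card := by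
  rw [← Finset.card_map e.toEmbedding]
  congr 1
  ext b
  simp only [Finset.mem_map, Finset.mem_filter, Finset.mem_univ, true_and,
    Equiv.coe_toEmbedding]
  constructor
  · rintro ⟨a, ha, rfl⟩; exact ha
  · intro hb; exact ⟨e.symm b, by simpa using hb, by simp⟩

theorem pair_filter_card [Fintype F] [DecidableEq F] {x1 x2 : F} (h : x1 ≠ x2) :
    (univ.filter fun x : F => x = x1 ∨ x = x2).card = 2 := by
  have : (univ.filter fun x : F => x = x1 ∨ x = x2) = {x1, x2} := by
    ext x; simp
  rw [this, Finset.card_pair h]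

variable (h2 : (2 : F) = 0)

include h2

theorem add_self (x : F) : x + x = 0 := by linear_combination x * h2

theorem neg_eq (x : F) : -x = x := by linear_combination -x * h2

theorem V_add {a b : F} (ha : a ∈ Vset F) (hb : b ∈ Vset F) : a + b ∈ Vset F := by
  obtain ⟨s, rfl⟩ := ha; obtain ⟨t, rfl⟩ := hb
  exact ⟨s + t, by linear_combination (-(s * t)) * h2⟩

theorem V_sq {x : F} (hx : x ∈ Vset F) : x ^ 2 ∈ Vset F := by
  obtain ⟨t, rfl⟩ := hx
  exact ⟨t ^ 2, by linear_combination (t ^ 3) * h2⟩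

theorem sq_inj : Function.Injective (fun x : F => x ^ 2) := by
  intro x y h
  simp only at h
  have h0 : (x - y) ^ 2 = 0 := by linear_combination h + (y ^ 2 - x * y) * h2
  have := pow_eq_zero_iff (n := 2) (by norm_num) |>.mp h0
  exact sub_eq_zero.mp this

theorem sq_surj [Fintype F] : Function.Surjective (fun x : F => x ^ 2) :=
  Finite.surjective_of_injective (sq_inj h2)

omit h2

/-- A square-root function on a finite field of characteristic two. -/
noncomputable def sqrtF [Fintype F] (h2 : (2 : F) = 0) : F ≃ F :=
  (Equiv.ofBijective _ ⟨sq_inj h2, sq_surj h2⟩).symm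

include h2

theorem sqrtF_sq [Fintype F] (x : F) : (sqrtF h2 x) ^ 2 = x :=
  (Equiv.ofBijective (fun x : F => x ^ 2) ⟨sq_inj h2, sq_surj h2⟩).apply_symm_apply x

theorem sq_sqrtF [Fintype F] (x : F) : sqrtF h2 (x ^ 2) = x :=
  (Equiv.ofBijective (fun x : F => x ^ 2) ⟨sq_inj h2, sq_surj h2⟩).symm_apply_apply x

omit h2

theorem exists_quad_iff {p q : F} (hp : p ≠ 0) (hq : q ≠ 0) (v : F) :
    (∃ x : F, p * x ^ 2 + q * x = v) ↔ (∃ t : F, q ^ 2 / p * (t ^ 2 + t) = v) := by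
  constructor
  · rintro ⟨x, rfl⟩
    refine ⟨x * p / q, ?_⟩
    field_simp
  · rintro ⟨t, rfl⟩
    refine ⟨q / p * t, ?_⟩
    field_simp

theorem quad_fiber_card [Fintype F] [DecidableEq F] (h2 : (2 : F) = 0) {p q : F}
    (hp : p ≠ 0) (hq : q ≠ 0) (v : F) :
    (univ.filter fun x : F => p * x ^ 2 + q * x = v).card
      = if (∃ x : F, p * x ^ 2 + q * x = v) then 2 else 0 := by
  by_cases hex : ∃ x : F, p * x ^ 2 + q * x = v
  · rw [if_pos hex]
    obtain ⟨x0, hx0⟩ := hex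
    have key : (univ.filter fun x : F => p * x ^ 2 + q * x = v)
        = univ.filter fun x : F => x = x0 ∨ x = x0 + q / p := by
      ext x
      simp only [Finset.mem_filter, Finset.mem_univ, true_and]
      constructor
      · intro hx
        have hfac : (x - x0) * (p * (x + x0) + q) = 0 := by linear_combination hx - hx0
        rcases mul_eq_zero.mp hfac with h | h
        · exact Or.inl (sub_eq_zero.mp h)
        · right
          field_simp
          linear_combination -h + p * x * h2
      · rintro (rfl | rfl)
        · exact hx0
        · have hr : (q / p) * p = q := div_mul_cancel₀ q hp
          linear_combination hx0 + (q / p) * hr + (p * x0 * (q / p) + q * (q / p)) * h2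
    rw [key, pair_filter_card]
    intro hcon
    have hq0 : q / p = 0 := by linear_combination -hcon
    rw [div_eq_zero_iff] at hq0
    tauto
  · rw [if_neg hex]
    rw [Finset.card_eq_zero, Finset.filter_eq_empty_iff]
    intro x _
    exact fun hx => hex ⟨x, hx⟩


theorem V_card [Fintype F] (h2 : (2 : F) = 0) : 2 * (Vset F).ncard = Fintype.card F := by
  have hψ : ∀ a b : F, (fun t : F => t ^ 2 + t) (a + b)
      = (fun t : F => t ^ 2 + t) a + (fun t : F => t ^ 2 + t) b := by
    intro a b
    simp only
    linear_combination (a * b) * h2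
  let ψ : F →+ F := AddMonoidHom.mk' (fun t => t ^ 2 + t) hψ
  have hrange : (Vset F) = Set.range ψ :=
    Set.ext fun v => ⟨fun ⟨t, ht⟩ => ⟨t, ht.symm⟩, fun ⟨t, ht⟩ => ⟨t, ht.symm⟩⟩
  have hker : ((ψ.ker : Set F)) = {0, 1} := by
    ext t
    simp only [SetLike.mem_coe, AddMonoidHom.mem_ker, AddMonoidHom.mk'_apply, ψ,
      Set.mem_insert_iff, Set.mem_singleton_iff]
    constructor
    · intro ht
      have hfac : t * (t + 1) = 0 := by linear_combination ht
      rcases mul_eq_zero.mp hfac with h | h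
      · exact Or.inl h
      · exact Or.inr (by linear_combination h - h2)
    · rintro (rfl | rfl)
      · ring
      · linear_combination h2
  have hcard1 : Nat.card F = Nat.card (F ⧸ ψ.ker) * Nat.card ψ.ker :=
    AddSubgroup.card_eq_card_quotient_mul_card_addSubgroup _
  have hcard2 : Nat.card (F ⧸ ψ.ker) = Nat.card ψ.range :=
    Nat.card_congr (QuotientAddGroup.quotientKerEquivRange ψ).toEquiv
  have hker2 : Nat.card ψ.ker = 2 := by
    have h' : Nat.card ((ψ.ker : Set F)) = 2 := by
      rw [hker, Nat.card_coe_set_eq]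
      exact Set.ncard_pair zero_ne_one
    exact h'
  have hrange2 : Nat.card ψ.range = (Vset F).ncard := by
    have h' : Nat.card ((ψ.range : Set F)) = (Vset F).ncard := by
      rw [show ((ψ.range : Set F)) = Set.range ψ from AddMonoidHom.coe_range ψ, ← hrange,
        Nat.card_coe_set_eq]
    exact h' 
  rw [hcard2, hrange2, hker2, Nat.card_eq_fintype_card] at hcard1
  omega

/-- A subset of `F` which is an additive subgroup of index two. -/
def IsHalf [Fintype F] (W : Set F) : Prop :=
  0 ∈ W ∧ (∀ a ∈ W, ∀ b ∈ W, a + b ∈ W) ∧ 2 * W.ncard = Fintype.card F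

theorem V_isHalf [Fintype F] (h2 : (2 : F) = 0) : IsHalf (Vset F) :=
  ⟨V_zero, fun _ ha _ hb => V_add h2 ha hb, V_card h2⟩

theorem half_compl [Fintype F] (h2 : (2 : F) = 0) {W : Set F} (hW : IsHalf W) {x y : F}
    (hx : x ∉ W) (hy : y ∉ W) : x + y ∈ W := by
  obtain ⟨hW0, hWadd, hWcard⟩ := hW
  have himg : ((x + ·) '' W) ⊆ Wᶜ := by
    rintro _ ⟨w, hw, rfl⟩ hmem
    refine hx ?_
    have hmem2 := hWadd _ hmem _ hw
    rwa [show x + w + w = x from by linear_combination w * h2] at hmem2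
  have hcompl : ((x + ·) '' W) = Wᶜ := by
    refine Set.eq_of_subset_of_ncard_le himg ?_ (Set.toFinite _)
    rw [Set.ncard_image_of_injective _ (add_right_injective x)]
    have := Set.ncard_add_ncard_compl W
    rw [Nat.card_eq_fintype_card] at this
    omega
  have hy' : y ∈ ((x + ·) '' W) := hcompl ▸ hy
  obtain ⟨w, hw, hyw⟩ := hy'
  rwa [show x + y = w from by linear_combination -hyw + x * h2]

theorem split_half [Fintype F] (h2 : (2 : F) = 0) {H W : Set F} (hH0 : 0 ∈ H)
    (hHadd : ∀ a ∈ H, ∀ b ∈ H, a + b ∈ H) (hW : IsHalf W) :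
    (H \ W).ncard = 0 ∨ 2 * (H \ W).ncard = H.ncard := by
  by_cases hne : (H \ W) = ∅
  · left; rw [hne, Set.ncard_empty]
  right
  obtain ⟨h0, h0H, h0W⟩ := Set.nonempty_iff_ne_empty.mpr hne
  have key : ((h0 + ·) '' (H ∩ W)) = H \ W := by
    ext y
    constructor
    · rintro ⟨w, ⟨hwH, hwW⟩, rfl⟩
      refine ⟨hHadd _ h0H _ hwH, fun hmem => h0W ?_⟩
      have := hW.2.1 _ hmem _ hwW
      rwa [show h0 + w + w = h0 from by linear_combination w * h2] at this
    · rintro ⟨hyH, hyW⟩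
      refine ⟨h0 + y, ⟨hHadd _ h0H _ hyH, half_compl h2 hW h0W hyW⟩, ?_⟩
      linear_combination h0 * h2
  have hcard : (H ∩ W).ncard = (H \ W).ncard := by
    rw [← key, Set.ncard_image_of_injective _ (add_right_injective h0)]
  have := Set.ncard_inter_add_ncard_diff_eq_ncard H W (Set.toFinite H)
  omega

theorem dilate_isHalf [Fintype F] (h2 : (2 : F) = 0) {β : F} (hβ : β ≠ 0) :
    IsHalf {w : F | β * w ∈ Vset F} := by
  classical
  refine ⟨by simpa using V_zero, fun a ha b hb => ?_, ?_⟩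
  · show β * (a + b) ∈ Vset F
    rw [mul_add]
    exact V_add h2 ha hb
  · have h1 : ({w : F | β * w ∈ Vset F}).ncard = (Vset F).ncard := by
      have h := ncard_preimage_equiv (Equiv.mulLeft₀ β hβ) (Vset F)
      have hs : {w : F | β * w ∈ Vset F}
          = {a : F | (Equiv.mulLeft₀ β hβ) a ∈ Vset F} := by
        ext w
        simp [Equiv.mulLeft₀_apply]
      rw [hs, h]
    rw [h1, V_card h2]

theorem exists_not_V [Fintype F] (h2 : (2 : F) = 0) : ∃ a : F, a ∉ Vset F := by
  by_contra hcon
  push_neg at hcon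
  have huniv : (Vset F) = Set.univ := Set.eq_univ_of_forall hcon
  have hc := V_card (F := F) h2
  rw [huniv, Set.ncard_univ, Nat.card_eq_fintype_card] at hc
  have : 0 < Fintype.card F := Fintype.card_pos
  omega

theorem quad_count [Fintype F] (h2 : (2 : F) = 0) {H : Set F} (hH0 : 0 ∈ H)
    (hHadd : ∀ a ∈ H, ∀ b ∈ H, a + b ∈ H) {e c k : F} (he : e ≠ 0)
    (hk : c ≠ 0 → ∀ t : F, e * k ≠ c ^ 2 * (t ^ 2 + t)) :
    {x : F | e * x ^ 2 + c * x + k ∈ H}.ncard = 0 ∨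
      {x : F | e * x ^ 2 + c * x + k ∈ H}.ncard = H.ncard := by
  classical
  by_cases hc : c = 0
  · right
    subst hc
    have hinj : Function.Injective (fun x : F => e * x ^ 2 + 0 * x + k) := by
      intro x y hxy
      simp only at hxy
      have hx2 : e * x ^ 2 = e * y ^ 2 := by linear_combination hxy
      exact sq_inj h2 (mul_left_cancel₀ he hx2)
    exact ncard_preimage_equiv
      (Equiv.ofBijective _ ⟨hinj, Finite.surjective_of_injective hinj⟩) H
  · -- c ≠ 0
    set W : Set F := {w : F | (e / c ^ 2) * w ∈ Vset F} with hWdef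
    have hWhalf : IsHalf W := dilate_isHalf h2 (div_ne_zero he (pow_ne_zero 2 hc))
    have hkW : k ∉ W := by
      intro hmem
      obtain ⟨t, ht⟩ := hmem
      refine hk hc t ?_
      rw [← ht]
      field_simp
      try ring
    have hiff : ∀ h : F, (∃ x : F, e * x ^ 2 + c * x = h - k) ↔ h ∉ W := by
      intro h
      rw [exists_quad_iff he hc]
      constructor
      · rintro ⟨t, ht⟩ hhW
        refine hkW ?_
        have hhk : h - k ∈ W := by
          show (e / c ^ 2) * (h - k) ∈ Vset F
          refine ⟨t, ?_⟩
          rw [← ht]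
          field_simp
          try ring
        have := hWhalf.2.1 _ hhW _ hhk
        rwa [show h + (h - k) = k from by linear_combination (h - k) * h2] at this
      · intro hhW
        have hkW' : h - k ∈ W := by
          have := half_compl h2 hWhalf hhW hkW
          rwa [show h + k = h - k from by linear_combination k * h2] at this
        obtain ⟨t, ht⟩ := hkW'
        refine ⟨t, ?_⟩
        rw [← ht]
        field_simp
        try ring
    have h1 : {x : F | e * x ^ 2 + c * x + k ∈ H}.ncard
        = (univ.filter fun x : F => e * x ^ 2 + c * x + k ∈ H).card := ncard_filter _
    have hsum : (univ.filter fun x : F => e * x ^ 2 + c * x + k ∈ H).card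
        = ∑ h ∈ univ.filter (· ∈ H),
            ((univ.filter fun x : F => e * x ^ 2 + c * x + k ∈ H).filter
              (fun x => e * x ^ 2 + c * x + k = h)).card :=
      Finset.card_eq_sum_card_fiberwise (by
        intro x hx
        simp only [Finset.mem_coe, mem_filter, mem_univ, true_and] at hx ⊢
        exact hx)
    have hsum2 : ∀ h ∈ univ.filter (· ∈ H),
        ((univ.filter fun x : F => e * x ^ 2 + c * x + k ∈ H).filter
          (fun x => e * x ^ 2 + c * x + k = h)).card
        = if h ∉ W then 2 else 0 := by
      intro h hh
      simp only [mem_filter, mem_univ, true_and] at hh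
      have hflt : ((univ.filter fun x : F => e * x ^ 2 + c * x + k ∈ H).filter
          (fun x => e * x ^ 2 + c * x + k = h))
          = univ.filter fun x : F => e * x ^ 2 + c * x = h - k := by
        rw [Finset.filter_filter]
        ext x
        simp only [mem_filter, mem_univ, true_and]
        constructor
        · rintro ⟨-, hx⟩; linear_combination hx
        · intro hx
          have : e * x ^ 2 + c * x + k = h := by linear_combination hx
          exact ⟨this ▸ hh, this⟩
      rw [hflt, quad_fiber_card h2 he hc]
      by_cases hW' : h ∉ W
      · rw [if_pos ((hiff h).mpr hW'), if_pos hW']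
      · rw [if_neg (fun hex => hW' ((hiff h).mp hex)), if_neg hW']
    rw [h1, hsum, Finset.sum_congr rfl hsum2]
    rw [Finset.sum_ite, Finset.sum_const, Finset.sum_const, smul_eq_mul, smul_eq_mul,
      mul_zero, add_zero]
    have hsplit := split_half h2 hH0 hHadd hWhalf
    have hHW : ((univ.filter (· ∈ H)).filter (fun h => h ∉ W)).card = (H \ W).ncard := by
      rw [Finset.filter_filter]
      rw [show (H \ W : Set F) = {h | h ∈ H ∧ h ∉ W} from rfl, ncard_filter]
    rw [hHW]
    rcases hsplit with h0 | hsome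
    · left; omega
    · right; omega



theorem prod_mk_left_injective {α β : Type} (y : β) : Function.Injective (fun x : α => (x, y)) :=
  fun u v huv => by simpa using congrArg Prod.fst huv

theorem card_prod_fiber {α β : Type} [Fintype α] [Fintype β] [DecidableEq α] [DecidableEq β]
    (P : α × β → Prop) [DecidablePred P] :
    (univ.filter P).card = ∑ y : β, (univ.filter fun x : α => P (x, y)).card := by
  rw [Finset.card_eq_sum_card_fiberwise (f := Prod.snd) (t := univ) (fun x _ => mem_univ _)]
  refine Finset.sum_congr rfl fun y _ => ?_
  rw [Finset.filter_filter]
  have himg : (univ.filter fun z : α × β => P z ∧ z.2 = y)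
      = (univ.filter fun x : α => P (x, y)).image (fun x => (x, y)) := by
    ext z
    obtain ⟨z1, z2⟩ := z
    simp only [Finset.mem_image, Finset.mem_filter, Finset.mem_univ, true_and, Prod.mk.injEq]
    constructor
    · rintro ⟨hz, rfl⟩
      exact ⟨z1, hz, rfl, rfl⟩
    · rintro ⟨x, hx, rfl, rfl⟩
      exact ⟨hx, rfl⟩
  rw [himg, Finset.card_image_of_injective _ (prod_mk_left_injective y)]

/-- The anisotropic quadratic form `x² + xy + ay²`. -/
def Nform (a : F) (z : F × F) : F := z.1 ^ 2 + z.1 * z.2 + a * z.2 ^ 2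

theorem Nform_zero (a : F) : Nform a 0 = 0 := by simp [Nform]

theorem Nform_aniso (h2 : (2 : F) = 0) {a : F} (ha : a ∉ Vset F) {z : F × F}
    (hz : Nform a z = 0) : z = 0 := by
  obtain ⟨x, y⟩ := z
  unfold Nform at hz
  simp only at hz
  by_cases hy : y = 0
  · subst hy
    have hx : x ^ 2 = 0 := by linear_combination hz
    have : x = 0 := by
      have := pow_eq_zero_iff (n := 2) (by norm_num) |>.mp hx
      exact this
    simp [this]
  · exfalso
    refine ha ⟨x / y, ?_⟩
    rw [div_pow, div_add_div _ _ (pow_ne_zero 2 hy) hy,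
      eq_div_iff (mul_ne_zero (pow_ne_zero 2 hy) hy)]
    linear_combination (-y) * hz + (a * y ^ 3) * h2

theorem fiber_count [Fintype F] (h2 : (2 : F) = 0) {a : F} (ha : a ∉ Vset F) {c : F}
    (hc : c ≠ 0) : {z : F × F | Nform a z = c}.ncard = Fintype.card F + 1 := by
  classical
  rw [ncard_filter, card_prod_fiber]
  have hterm : ∀ y : F, (univ.filter fun x : F => Nform a (x, y) = c).card
      = if y = 0 then 1 else
          (if (∃ t : F, y ^ 2 / 1 * (t ^ 2 + t) = c - a * y ^ 2) then 2 else 0) := by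
    intro y
    by_cases hy : y = 0
    · subst hy
      rw [if_pos rfl]
      have hset : (univ.filter fun x : F => Nform a (x, 0) = c) = {sqrtF h2 c} := by
        ext x
        simp only [Finset.mem_filter, Finset.mem_univ, true_and, Finset.mem_singleton]
        unfold Nform
        simp only
        constructor
        · intro hx
          have hx2 : x ^ 2 = c := by linear_combination hx
          rw [← hx2, sq_sqrtF]
        · rintro rfl
          rw [show sqrtF h2 c ^ 2 + sqrtF h2 c * 0 + a * 0 ^ 2 = sqrtF h2 c ^ 2 from by ring,
            sqrtF_sq]
      rw [hset, Finset.card_singleton]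
    · rw [if_neg hy]
      have hset : (univ.filter fun x : F => Nform a (x, y) = c)
          = univ.filter fun x : F => 1 * x ^ 2 + y * x = c - a * y ^ 2 := by
        ext x
        simp only [Finset.mem_filter, Finset.mem_univ, true_and]
        unfold Nform
        simp only
        constructor
        · intro hx; linear_combination hx
        · intro hx; linear_combination hx
      rw [hset, quad_fiber_card h2 one_ne_zero hy]
      exact if_congr (exists_quad_iff one_ne_zero hy _) rfl rfl
  rw [Finset.sum_congr rfl fun y _ => hterm y, ← Finset.add_sum_erase _ _ (mem_univ (0 : F)),
    if_pos rfl]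
  have herase : ∀ y ∈ univ.erase (0 : F),
      (if y = (0 : F) then (1 : ℕ) else
        (if (∃ t : F, y ^ 2 / 1 * (t ^ 2 + t) = c - a * y ^ 2) then 2 else 0))
      = (if (∃ t : F, y ^ 2 / 1 * (t ^ 2 + t) = c - a * y ^ 2) then 2 else 0) := by
    intro y hy
    rw [if_neg (Finset.mem_erase.mp hy).1]
  rw [Finset.sum_congr rfl herase, ← Finset.sum_filter, Finset.sum_const, smul_eq_mul]
  have hbij : ((univ.erase (0 : F)).filter
      fun y : F => (∃ t : F, y ^ 2 / 1 * (t ^ 2 + t) = c - a * y ^ 2)).card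
      = (univ.filter (· ∈ Vset F)).card := by
    refine Finset.card_bij' (fun y _ => c * (y⁻¹) ^ 2 - a)
      (fun v _ => (sqrtF h2 ((v + a) / c))⁻¹) ?_ ?_ ?_ ?_
    · intro y hy
      have hy0 : y ≠ 0 := (Finset.mem_erase.mp (Finset.mem_filter.mp hy).1).1
      obtain ⟨t, ht⟩ := (Finset.mem_filter.mp hy).2
      simp only [Finset.mem_filter, Finset.mem_univ, true_and]
      refine ⟨t, ?_⟩
      field_simp at ht ⊢
      linear_combination -ht
    · intro v hv
      have hvV : v ∈ Vset F := (Finset.mem_filter.mp hv).2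
      obtain ⟨t, ht⟩ := hvV
      have hva : v + a ≠ 0 := by
        intro hcon
        exact ha ⟨t, by linear_combination hcon - ht - (t ^ 2 + t) * h2⟩
      have hsne : sqrtF h2 ((v + a) / c) ≠ 0 := by
        intro hcon
        have : (v + a) / c = 0 := by
          have h0 : sqrtF h2 ((v + a) / c) ^ 2 = (v + a) / c := sqrtF_sq h2 _
          rw [hcon] at h0
          simpa using h0.symm
        exact (div_ne_zero hva hc) this
      simp only [Finset.mem_filter, Finset.mem_erase, Finset.mem_univ, true_and]
      refine ⟨⟨inv_ne_zero hsne, trivial⟩, ⟨t, ?_⟩⟩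
      have hs2 : sqrtF h2 ((v + a) / c) ^ 2 = (v + a) / c := sqrtF_sq h2 _
      rw [div_one, inv_pow, hs2, ← ht, inv_div]
      field_simp
      ring
    · intro y hy
      have hy0 : y ≠ 0 := (Finset.mem_erase.mp (Finset.mem_filter.mp hy).1).1
      rw [sub_add_cancel, mul_div_cancel_left₀ _ hc, sq_sqrtF, inv_inv]
    · intro v hv
      rw [inv_inv, sqrtF_sq]
      field_simp
      ring
  rw [hbij, ← ncard_filter, Set.setOf_mem_eq]
  have hV := V_card (F := F) h2
  omega


theorem S_card [Fintype F] (h2 : (2 : F) = 0) {a : F} (ha : a ∉ Vset F) {H : Set F}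
    (hH0 : 0 ∈ H) :
    {z : F × F | Nform a z ∈ H}.ncard = (H.ncard - 1) * Fintype.card F + H.ncard := by
  classical
  rw [ncard_filter]
  have hfiber : (univ.filter fun z : F × F => Nform a z ∈ H).card
      = ∑ h ∈ univ.filter (· ∈ H), ((univ.filter fun z : F × F => Nform a z ∈ H).filter
          (fun z => Nform a z = h)).card :=
    Finset.card_eq_sum_card_fiberwise (by
      intro z hz
      simp only [Finset.mem_coe, Finset.mem_filter, Finset.mem_univ, true_and] at hz ⊢
      exact hz)
  have hfib2 : ∀ h ∈ univ.filter (· ∈ H),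
      ((univ.filter fun z : F × F => Nform a z ∈ H).filter (fun z => Nform a z = h)).card
      = (univ.filter fun z : F × F => Nform a z = h).card := by
    intro h hh
    simp only [Finset.mem_filter, Finset.mem_univ, true_and] at hh
    rw [Finset.filter_filter]
    refine congrArg Finset.card ?_
    ext z
    simp only [Finset.mem_filter, Finset.mem_univ, true_and]
    exact ⟨fun hz => hz.2, fun hz => ⟨hz ▸ hh, hz⟩⟩
  have h0mem : (0 : F) ∈ univ.filter (· ∈ H) := by
    simp only [Finset.mem_filter, Finset.mem_univ, true_and]
    exact hH0
  have hzero : (univ.filter fun z : F × F => Nform a z = 0).card = 1 := by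
    have hone : (univ.filter fun z : F × F => Nform a z = 0) = {(0 : F × F)} := by
      ext z
      simp only [Finset.mem_filter, Finset.mem_univ, true_and, Finset.mem_singleton]
      exact ⟨fun hz => Nform_aniso h2 ha hz, fun hz => hz ▸ Nform_zero a⟩
    rw [hone, Finset.card_singleton]
  have hrest : ∀ h ∈ (univ.filter (· ∈ H)).erase 0,
      (univ.filter fun z : F × F => Nform a z = h).card = Fintype.card F + 1 := by
    intro h hh
    rw [← ncard_filter]
    exact fiber_count h2 ha (Finset.mem_erase.mp hh).1
  rw [hfiber, Finset.sum_congr rfl hfib2, ← Finset.add_sum_erase _ _ h0mem, hzero,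
    Finset.sum_congr rfl hrest, Finset.sum_const, smul_eq_mul,
    Finset.card_erase_of_mem h0mem]
  have hHcard : (univ.filter (· ∈ H)).card = H.ncard := by
    rw [← ncard_filter, Set.setOf_mem_eq]
  rw [hHcard]
  have hpos : 1 ≤ H.ncard := (Set.ncard_pos (Set.toFinite H)).mpr ⟨0, hH0⟩
  zify [hpos]
  ring

theorem count_line_vert [Fintype F] (h2 : (2 : F) = 0) {a : F} (ha : a ∉ Vset F) {H : Set F}
    (hH0 : 0 ∈ H) (hHadd : ∀ p ∈ H, ∀ q ∈ H, p + q ∈ H) (x0 : F) :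
    {z : F × F | Nform a z ∈ H ∧ z.1 = x0}.ncard = 0 ∨
      {z : F × F | Nform a z ∈ H ∧ z.1 = x0}.ncard = H.ncard := by
  classical
  have ha0 : a ≠ 0 := fun hcon => ha (hcon ▸ V_zero)
  have himg : {z : F × F | Nform a z ∈ H ∧ z.1 = x0}
      = (fun y : F => (x0, y)) '' {y : F | a * y ^ 2 + x0 * y + x0 ^ 2 ∈ H} := by
    ext z
    obtain ⟨z1, z2⟩ := z
    simp only [Set.mem_setOf_eq, Set.mem_image, Prod.mk.injEq]
    constructor
    · rintro ⟨hN, rfl⟩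
      refine ⟨z2, ?_, rfl, rfl⟩
      rwa [show a * z2 ^ 2 + z1 * z2 + z1 ^ 2 = Nform a (z1, z2) from by unfold Nform; ring]
    · rintro ⟨y, hy, rfl, rfl⟩
      refine ⟨?_, rfl⟩
      rwa [show Nform a (x0, y) = a * y ^ 2 + x0 * y + x0 ^ 2 from by unfold Nform; ring]
  rw [himg, Set.ncard_image_of_injective _
    (fun u v huv => by simpa using congrArg Prod.snd huv)]
  refine quad_count h2 hH0 hHadd ha0 ?_
  intro hx0 t hcon
  refine ha ⟨t, ?_⟩
  have hx2 : (x0 : F) ^ 2 ≠ 0 := pow_ne_zero 2 hx0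
  exact mul_right_cancel₀ hx2 (by linear_combination hcon)

theorem count_line_oblique [Fintype F] (h2 : (2 : F) = 0) {a : F} (ha : a ∉ Vset F) {H : Set F}
    (hH0 : 0 ∈ H) (hHadd : ∀ p ∈ H, ∀ q ∈ H, p + q ∈ H) (u0 u1 u2 : F) (hu2 : u2 ≠ 0) :
    {z : F × F | Nform a z ∈ H ∧ u0 + u1 * z.1 + u2 * z.2 = 0}.ncard = 0 ∨
      {z : F × F | Nform a z ∈ H ∧ u0 + u1 * z.1 + u2 * z.2 = 0}.ncard = H.ncard := by
  classical
  set d : F := -(u1 / u2) with hd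
  set cc : F := -(u0 / u2) with hcc
  set e : F := 1 + d + a * d ^ 2 with he
  have heN : e = Nform a (1, d) := by unfold Nform; simp only; ring
  have he0 : e ≠ 0 := by
    intro hcon
    have := Nform_aniso h2 ha (heN ▸ hcon)
    have h1 : (1 : F) = 0 := congrArg Prod.fst this
    exact one_ne_zero h1
  have himg : {z : F × F | Nform a z ∈ H ∧ u0 + u1 * z.1 + u2 * z.2 = 0}
      = (fun x : F => (x, cc + d * x)) '' {x : F | e * x ^ 2 + cc * x + a * cc ^ 2 ∈ H} := by
    ext z
    obtain ⟨z1, z2⟩ := z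
    simp only [Set.mem_setOf_eq, Set.mem_image, Prod.mk.injEq]
    constructor
    · rintro ⟨hN, hline⟩
      have hid : u2 * (cc + d * z1) = -u0 - u1 * z1 := by
        rw [hcc, hd]
        field_simp
        try ring
      have hz2 : z2 = cc + d * z1 := by
        refine mul_left_cancel₀ hu2 ?_
        rw [hid]
        linear_combination hline
      refine ⟨z1, ?_, rfl, hz2.symm⟩
      rw [show e * z1 ^ 2 + cc * z1 + a * cc ^ 2 = Nform a (z1, cc + d * z1) from by
        unfold Nform; simp only; rw [he]; linear_combination (-(a * cc * d * z1)) * h2]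
      rwa [← hz2]
    · rintro ⟨x, hx, rfl, rfl⟩
      constructor
      · rwa [show Nform a (x, cc + d * x) = e * x ^ 2 + cc * x + a * cc ^ 2 from by
          unfold Nform; simp only; rw [he]; linear_combination (a * cc * d * x) * h2]
      · rw [hcc, hd]
        field_simp
        try ring
  rw [himg, Set.ncard_image_of_injective _
    (fun u v huv => by simpa using congrArg Prod.fst huv)]
  refine quad_count h2 hH0 hHadd he0 ?_
  intro hcc0 t hcon
  have hcc2 : (cc : F) ^ 2 ≠ 0 := pow_ne_zero 2 hcc0
  have heq' : e * a = t ^ 2 + t := by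
    have : (e * a) * cc ^ 2 = (t ^ 2 + t) * cc ^ 2 := by linear_combination hcon
    exact mul_right_cancel₀ hcc2 this
  refine ha ⟨t + a * d, ?_⟩
  rw [he] at heq'
  linear_combination heq' - (t * a * d + a ^ 2 * d ^ 2 + a * d) * h2


theorem inter_bound [Fintype F] (h2 : (2 : F) = 0) {C D : Set F}
    (hCadd : ∀ p ∈ C, ∀ q ∈ C, p + q ∈ C) (hDadd : ∀ p ∈ D, ∀ q ∈ D, p + q ∈ D) :
    C.ncard * D.ncard ≤ (C ∩ D).ncard * Fintype.card F := by
  classical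
  set s : Finset (F × F) := (univ.filter (· ∈ C)) ×ˢ (univ.filter (· ∈ D)) with hs
  have hscard : s.card = C.ncard * D.ncard := by
    rw [hs, Finset.card_product, ← ncard_filter, ← ncard_filter, Set.setOf_mem_eq,
      Set.setOf_mem_eq]
  have hfibb : ∀ b ∈ s.image (fun p : F × F => p.1 + p.2),
      (s.filter fun p : F × F => p.1 + p.2 = b).card ≤ (C ∩ D).ncard := by
    intro b hb
    obtain ⟨p0, hp0s, hp0⟩ := Finset.mem_image.mp hb
    have hp0C : p0.1 ∈ C := by
      have := (Finset.mem_product.mp hp0s).1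
      simpa using this
    have hp0D : p0.2 ∈ D := by
      have := (Finset.mem_product.mp hp0s).2
      simpa using this
    rw [show (C ∩ D).ncard = (univ.filter (· ∈ C ∩ D)).card from by
      rw [← ncard_filter, Set.setOf_mem_eq]]
    refine Finset.card_le_card_of_injOn (fun p => p.1 + p0.1) ?_ ?_
    · intro p hp
      simp only [Finset.mem_coe, Finset.mem_filter] at hp
      obtain ⟨hps, hpb⟩ := hp
      have hpC : p.1 ∈ C := by
        have := (Finset.mem_product.mp (hs ▸ hps)).1
        simpa using this
      have hpD : p.2 ∈ D := by
        have := (Finset.mem_product.mp (hs ▸ hps)).2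
        simpa using this
      simp only [Finset.mem_coe, Finset.mem_filter, Finset.mem_univ, true_and, Set.mem_inter_iff]
      constructor
      · exact hCadd _ hpC _ hp0C
      · have heq : p.1 + p0.1 = p.2 + p0.2 := by
          linear_combination hpb - hp0 + (p0.1 - p.2) * h2
        rw [heq]
        exact hDadd _ hpD _ hp0D
    · intro p hp q hq hpq
      simp only [Finset.mem_coe, Finset.mem_filter] at hp hq
      have h1 : p.1 = q.1 := by
        have := add_right_cancel hpq
        exact this
      have h2' : p.2 = q.2 := by
        have hb1 : p.1 + p.2 = q.1 + q.2 := by rw [hp.2, hq.2]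
        rw [h1] at hb1
        exact add_left_cancel hb1
      exact Prod.ext h1 h2'
  have := Finset.card_le_mul_card_image s ((C ∩ D).ncard) hfibb
  have himg : (s.image (fun p : F × F => p.1 + p.2)).card ≤ Fintype.card F := by
    rw [← Finset.card_univ]
    exact Finset.card_le_card (Finset.subset_univ _)
  calc C.ncard * D.ncard = s.card := hscard.symm
    _ ≤ (C ∩ D).ncard * (s.image (fun p : F × F => p.1 + p.2)).card := this
    _ ≤ (C ∩ D).ncard * Fintype.card F := Nat.mul_le_mul_left _ himg

theorem exists_H [Fintype F] (h2 : (2 : F) = 0) {n : ℕ} (hcard : Fintype.card F = 2 ^ n)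
    (k : ℕ) (hk : 2 * k + 1 ≤ n) :
    ∃ H : Set F, 0 ∈ H ∧ (∀ x ∈ H, ∀ y ∈ H, x + y ∈ H) ∧ H.ncard = 2 ^ k ∧
      (∀ x ∈ H, ∀ y ∈ H, x * y ∈ Vset F) ∧
      2 ^ (k + 1) * {x : F | x ∈ Vset F ∧ ∀ h ∈ H, x * h ∈ Vset F}.ncard ≥ 2 ^ n := by
  induction k with
  | zero =>
    refine ⟨{0}, rfl, ?_, by simp, ?_, ?_⟩
    · rintro x hx y hy
      rw [Set.mem_singleton_iff] at hx hy
      rw [hx, hy]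
      simp
    · rintro x hx y hy
      rw [Set.mem_singleton_iff] at hx
      rw [hx]
      simpa using V_zero
    · have hCV : {x : F | x ∈ Vset F ∧ ∀ h ∈ ({0} : Set F), x * h ∈ Vset F} = Vset F := by
        ext x
        simp only [Set.mem_setOf_eq, Set.mem_singleton_iff]
        constructor
        · exact fun hx => hx.1
        · intro hx
          refine ⟨hx, ?_⟩
          rintro h rfl
          simpa using V_zero
      rw [hCV, pow_one, V_card h2, hcard]
  | succ k ih =>
    obtain ⟨H, hH0, hHadd, hHcard, hHV, hC⟩ := ih (by omega)
    set C : Set F := {x : F | x ∈ Vset F ∧ ∀ h ∈ H, x * h ∈ Vset F} with hCdef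
    have hCadd : ∀ p ∈ C, ∀ q ∈ C, p + q ∈ C := by
      rintro p ⟨hpV, hpm⟩ q ⟨hqV, hqm⟩
      refine ⟨V_add h2 hpV hqV, fun h hh => ?_⟩
      rw [add_mul]
      exact V_add h2 (hpm h hh) (hqm h hh)
    have hClarge : H.ncard < C.ncard := by
      have hpow : 2 ^ n = 2 ^ (k + 1) * 2 ^ (n - k - 1) := by
        rw [← pow_add]
        congr 1
        omega
      have hC2 : 2 ^ (n - k - 1) ≤ C.ncard := by
        by_contra hcon
        push_neg at hcon
        have : 2 ^ (k + 1) * C.ncard < 2 ^ (k + 1) * 2 ^ (n - k - 1) :=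
          (Nat.mul_lt_mul_left (Nat.pow_pos (by norm_num))).mpr hcon
        omega
      have hles : (2 : ℕ) ^ k < 2 ^ (n - k - 1) :=
        Nat.pow_lt_pow_right (by norm_num) (by omega)
      omega
    obtain ⟨x, hxC, hxH⟩ := Set.exists_mem_notMem_of_ncard_lt_ncard hClarge (Set.toFinite H)
    obtain ⟨hxV, hxmul⟩ := hxC
    have hx0 : x ≠ 0 := fun hcon => hxH (hcon ▸ hH0)
    set H' : Set F := H ∪ (x + ·) '' H with hH'def
    have hmemH' : ∀ y, y ∈ H' ↔ y ∈ H ∨ ∃ h ∈ H, y = x + h := by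
      intro y
      simp only [hH'def, Set.mem_union, Set.mem_image]
      constructor
      · rintro (hy | ⟨h, hh, rfl⟩)
        · exact Or.inl hy
        · exact Or.inr ⟨h, hh, rfl⟩
      · rintro (hy | ⟨h, hh, rfl⟩)
        · exact Or.inl hy
        · exact Or.inr ⟨h, hh, rfl⟩
    have hH'add : ∀ p ∈ H', ∀ q ∈ H', p + q ∈ H' := by
      intro p hp q hq
      rw [hmemH'] at hp hq ⊢
      rcases hp with hp | ⟨h, hh, rfl⟩ <;> rcases hq with hq | ⟨g, hg, rfl⟩
      · exact Or.inl (hHadd _ hp _ hq)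
      · exact Or.inr ⟨p + g, hHadd _ hp _ hg, by ring⟩
      · exact Or.inr ⟨h + q, hHadd _ hh _ hq, by ring⟩
      · refine Or.inl ?_
        rw [show x + h + (x + g) = h + g from by linear_combination x * h2]
        exact hHadd _ hh _ hg
    have hdisj : Disjoint H ((x + ·) '' H) := by
      rw [Set.disjoint_left]
      rintro y hy ⟨h, hh, rfl⟩
      refine hxH ?_
      rw [show x = (x + h) + h from by linear_combination (-h) * h2]
      exact hHadd _ hy _ hh
    have hH'card : H'.ncard = 2 ^ (k + 1) := by
      rw [hH'def, Set.ncard_union_eq hdisj (Set.toFinite _) (Set.toFinite _),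
        Set.ncard_image_of_injective _ (add_right_injective x), hHcard, pow_succ]
      ring
    have hH'V : ∀ p ∈ H', ∀ q ∈ H', p * q ∈ Vset F := by
      intro p hp q hq
      rw [hmemH'] at hp hq
      rcases hp with hp | ⟨h, hh, rfl⟩ <;> rcases hq with hq | ⟨g, hg, rfl⟩
      · exact hHV _ hp _ hq
      · rw [show p * (x + g) = x * p + p * g from by ring]
        exact V_add h2 (hxmul p hp) (hHV _ hp _ hg)
      · rw [show (x + h) * q = x * q + h * q from by ring]
        exact V_add h2 (hxmul q hq) (hHV _ hh _ hq)
      · rw [show (x + h) * (x + g) = ((x ^ 2 + x * h) + x * g) + h * g from by ring]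
        exact V_add h2 (V_add h2 (V_add h2 (V_sq h2 hxV) (hxmul h hh)) (hxmul g hg))
          (hHV _ hh _ hg)
    refine ⟨H', (hmemH' 0).mpr (Or.inl hH0), hH'add, hH'card, hH'V, ?_⟩
    set D : Set F := {w : F | x * w ∈ Vset F} with hDdef
    have hDhalf : IsHalf D := dilate_isHalf h2 hx0
    have hsub : C ∩ D ⊆ {w : F | w ∈ Vset F ∧ ∀ h ∈ H', w * h ∈ Vset F} := by
      rintro w ⟨⟨hwV, hwm⟩, hwD⟩
      refine ⟨hwV, fun h hh => ?_⟩
      rw [hmemH'] at hh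
      rcases hh with hh | ⟨g, hg, rfl⟩
      · exact hwm _ hh
      · rw [show w * (x + g) = x * w + w * g from by ring]
        exact V_add h2 hwD (hwm _ hg)
    have hle : (C ∩ D).ncard ≤ {w : F | w ∈ Vset F ∧ ∀ h ∈ H', w * h ∈ Vset F}.ncard :=
      Set.ncard_le_ncard hsub (Set.toFinite _)
    have hDadd : ∀ p ∈ D, ∀ q ∈ D, p + q ∈ D := by
      intro p hp q hq
      have hp' : x * p ∈ Vset F := hp
      have hq' : x * q ∈ Vset F := hq
      show x * (p + q) ∈ Vset F
      rw [mul_add]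
      exact V_add h2 hp' hq'
    have hbound := inter_bound (C := C) (D := D) h2 hCadd hDadd
    have hDcard : 2 * D.ncard = Fintype.card F := hDhalf.2.2
    have hq : 0 < Fintype.card F := Fintype.card_pos
    -- 2^(k+2) * (C ∩ D).ncard ≥ 2^n
    have hgoal : 2 ^ (k + 1 + 1) * (C ∩ D).ncard ≥ 2 ^ n := by
      have hstep : Fintype.card F * Fintype.card F
          ≤ (2 ^ (k + 1 + 1) * (C ∩ D).ncard) * Fintype.card F := by
        calc Fintype.card F * Fintype.card F
            = 2 ^ n * (2 * D.ncard) := by rw [hDcard, hcard]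
          _ ≤ (2 ^ (k + 1) * C.ncard) * (2 * D.ncard) := Nat.mul_le_mul_right _ hC
          _ = 2 ^ (k + 1) * (C.ncard * D.ncard) * 2 := by ring
          _ ≤ 2 ^ (k + 1) * ((C ∩ D).ncard * Fintype.card F) * 2 :=
              Nat.mul_le_mul_right 2 (Nat.mul_le_mul_left _ hbound)
          _ = (2 ^ (k + 1 + 1) * (C ∩ D).ncard) * Fintype.card F := by ring
      refine Nat.le_of_mul_le_mul_right ?_ hq
      calc 2 ^ n * Fintype.card F = Fintype.card F * Fintype.card F := by rw [hcard]
        _ ≤ (2 ^ (k + 1 + 1) * (C ∩ D).ncard) * Fintype.card F := hstep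
    calc 2 ^ (k + 1 + 1) * {w : F | w ∈ Vset F ∧ ∀ h ∈ H', w * h ∈ Vset F}.ncard
        ≥ 2 ^ (k + 1 + 1) * (C ∩ D).ncard := Nat.mul_le_mul_left _ hle
      _ ≥ 2 ^ n := hgoal


theorem conj_core (h2 : (2 : F) = 0) {a : F} (ha : a ∉ Vset F) {H : Set F}
    (hHV : ∀ p ∈ H, ∀ q ∈ H, p * q ∈ Vset F) {z w : F × F}
    (hz : Nform a z ∈ H) (hw : Nform a w ∈ H) : z.1 * w.2 + z.2 * w.1 ≠ 1 := by
  intro hB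
  obtain ⟨x, y⟩ := z
  obtain ⟨X, Y⟩ := w
  obtain ⟨t, ht⟩ := hHV _ hz _ hw
  simp only at hB
  have hkey : (x * X + x * Y + a * (y * Y)) ^ 2
      + (x * X + x * Y + a * (y * Y)) * (x * Y + y * X) + a * (x * Y + y * X) ^ 2
      = Nform a (x, y) * Nform a (X, Y) := by
    unfold Nform
    simp only
    linear_combination (x ^ 2 * X * Y + 2 * a * x * y * X * Y + x ^ 2 * Y ^ 2
      + a * x * y * Y ^ 2) * h2
  rw [hB] at hkey
  have hfin : (x * X + x * Y + a * (y * Y)) ^ 2 + (x * X + x * Y + a * (y * Y)) + a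
      = t ^ 2 + t := by linear_combination hkey + ht
  refine ha ⟨t + (x * X + x * Y + a * (y * Y)), ?_⟩
  linear_combination hfin - ((x * X + x * Y + a * (y * Y)) ^ 2
    + (x * X + x * Y + a * (y * Y)) + t * (x * X + x * Y + a * (y * Y))) * h2

end ERAux

open ERAux

/-- The projective point `[1 : x : y]`. -/
noncomputable def ptOf (z : F × F) : Projectivization F (Fin 3 → F) :=
  Projectivization.mk F ![1, z.1, z.2] (by
    intro h
    simpa using congrFun h 0)

theorem ptOf_rep (z : F × F) :
    ∃ c : F, c ≠ 0 ∧ (ptOf z).rep = c • ![1, z.1, z.2] := by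
  have h : Projectivization.mk F (ptOf (F := F) z).rep (Projectivization.rep_nonzero _)
      = Projectivization.mk F ![1, z.1, z.2] (by intro hc; simpa using congrFun hc 0) :=
    Projectivization.mk_rep _
  obtain ⟨u, hu⟩ := (Projectivization.mk_eq_mk_iff F _ _ _ _).mp h
  exact ⟨(u : F), u.ne_zero, by rw [← hu, Units.smul_def]⟩

theorem ptOf_injective : Function.Injective (ptOf (F := F)) := by
  intro z w h
  unfold ptOf at h
  rw [Projectivization.mk_eq_mk_iff] at h
  obtain ⟨u, hu⟩ := h
  have h0 := congrFun hu 0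
  have h1 := congrFun hu 1
  have h2 := congrFun hu 2
  simp [Units.smul_def] at h0 h1 h2
  rw [h0] at h1 h2
  norm_num at h1 h2
  exact Prod.ext h1.symm h2.symm

theorem ptOf_mem_lineSet (u : Fin 3 → F) (z : F × F) :
    ptOf z ∈ lineSet u ↔ u 0 + u 1 * z.1 + u 2 * z.2 = 0 := by
  obtain ⟨c, hc, hrep⟩ := ptOf_rep z
  unfold lineSet
  rw [Set.mem_setOf_eq, hrep]
  have e0 : (c • (![1, z.1, z.2] : Fin 3 → F)) 0 = c * 1 := by simp
  have e1 : (c • (![1, z.1, z.2] : Fin 3 → F)) 1 = c * z.1 := by simp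
  have e2 : (c • (![1, z.1, z.2] : Fin 3 → F)) 2 = c * z.2 := by simp
  rw [e0, e1, e2]
  constructor
  · intro hx
    have hfac : c * (u 0 + u 1 * z.1 + u 2 * z.2) = 0 := by linear_combination hx
    rcases mul_eq_zero.mp hfac with h | h
    · exact absurd h hc
    · exact h
  · intro hx
    linear_combination c * hx

/-- Let `q = 2ⁿ` with `n` odd and `m = 2^{(n-1)/2} = √(q/2)`. Then there is a maximal
arc `A` of degree `m` in `PG(2,q)` (a set of `(m-1)q + m` points meeting every line in
`0` or `m` points) no two points of which (equal or distinct) are conjugate with respect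
to the pseudo polarity; in particular `A` is an independent set of the Erdős–Rényi graph
`ER_q` containing no absolute points. -/
theorem exists_maximal_arc_coclique
    (n q m : ℕ) (hn : Odd n) (hq : q = 2 ^ n) (hm : m = 2 ^ ((n - 1) / 2))
    [Fintype F] (hF : Fintype.card F = q) :
    ∃ A : Set (Projectivization F (Fin 3 → F)),
      A.ncard = (m - 1) * q + m ∧
      (∀ l : Set (Projectivization F (Fin 3 → F)), IsLine l →
        (A ∩ l).ncard = 0 ∨ (A ∩ l).ncard = m) ∧
      (∀ P ∈ A, ∀ Q ∈ A,
        P.rep 0 * Q.rep 0 + P.rep 2 * Q.rep 1 + P.rep 1 * Q.rep 2 ≠ 0) := by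
  classical
  obtain ⟨j, hj⟩ := hn
  have hcard : Fintype.card F = 2 ^ n := by rw [hF, hq]
  obtain ⟨k, hp, hpk⟩ := FiniteField.card F (ringChar F)
  have hp2 : ringChar F = 2 := by
    have hd : ringChar F ∣ 2 ^ n := by
      rw [← hcard, hpk]
      exact dvd_pow_self _ k.pos.ne'
    have hdvd := hp.dvd_of_dvd_pow hd
    exact (Nat.prime_dvd_prime_iff_eq hp Nat.prime_two).mp hdvd
  have h2 : (2 : F) = 0 := by
    have hcast : ((ringChar F : ℕ) : F) = 0 := CharP.cast_eq_zero F (ringChar F)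
    rw [hp2] at hcast
    exact_mod_cast hcast
  obtain ⟨a, ha⟩ := ERAux.exists_not_V h2
  have hjn : 2 * j + 1 ≤ n := by omega
  obtain ⟨H, hH0, hHadd, hHcard, hHV, -⟩ := ERAux.exists_H h2 hcard j hjn
  have hmH : H.ncard = m := by
    rw [hHcard, hm]
    congr 1
    omega
  refine ⟨ptOf '' {z : F × F | ERAux.Nform a z ∈ H}, ?_, ?_, ?_⟩
  · rw [Set.ncard_image_of_injective _ ptOf_injective, ERAux.S_card h2 ha hH0, hmH, hF]
  · rintro l ⟨u, hu, rfl⟩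
    have hAint : ptOf '' {z : F × F | ERAux.Nform a z ∈ H} ∩ lineSet u
        = ptOf '' {z : F × F | ERAux.Nform a z ∈ H ∧ u 0 + u 1 * z.1 + u 2 * z.2 = 0} := by
      ext P
      constructor
      · rintro ⟨⟨z, hzS, rfl⟩, hPl⟩
        exact ⟨z, ⟨hzS, (ptOf_mem_lineSet u z).mp hPl⟩, rfl⟩
      · rintro ⟨z, ⟨hz1, hz2⟩, rfl⟩
        exact ⟨⟨z, hz1, rfl⟩, (ptOf_mem_lineSet u z).mpr hz2⟩
    rw [hAint, Set.ncard_image_of_injective _ ptOf_injective]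
    by_cases hu2 : u 2 ≠ 0
    · rw [← hmH]
      exact ERAux.count_line_oblique h2 ha hH0 hHadd (u 0) (u 1) (u 2) hu2
    · push_neg at hu2
      by_cases hu1 : u 1 ≠ 0
      · have hset : {z : F × F | ERAux.Nform a z ∈ H ∧ u 0 + u 1 * z.1 + u 2 * z.2 = 0}
            = {z : F × F | ERAux.Nform a z ∈ H ∧ z.1 = -(u 0 / u 1)} := by
          ext z
          simp only [Set.mem_setOf_eq, and_congr_right_iff]
          intro _
          rw [hu2]
          constructor
          · intro hline
            field_simp
            linear_combination hline
          · intro hz1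
            rw [hz1]
            field_simp
            try ring
        rw [hset, ← hmH]
        exact ERAux.count_line_vert h2 ha hH0 hHadd _
      · push_neg at hu1
        have hu0 : u 0 ≠ 0 := by
          intro h0
          apply hu
          funext i
          fin_cases i <;> simp [h0, hu1, hu2]
        left
        have hempty : {z : F × F | ERAux.Nform a z ∈ H ∧ u 0 + u 1 * z.1 + u 2 * z.2 = 0}
            = ∅ := by
          ext z
          simp only [Set.mem_setOf_eq, Set.mem_empty_iff_false, iff_false, not_and]
          intro _ hline
          rw [hu1, hu2] at hline
          exact hu0 (by linear_combination hline)
        rw [hempty, Set.ncard_empty]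
  · rintro P ⟨z, hz, rfl⟩ Q ⟨w, hw, rfl⟩
    obtain ⟨c, hc, hcrep⟩ := ptOf_rep z
    obtain ⟨c', hc', hcrep'⟩ := ptOf_rep w
    rw [hcrep, hcrep']
    intro hcon
    simp only [Pi.smul_apply, smul_eq_mul, Matrix.cons_val_zero, Matrix.cons_val_one,
      Matrix.head_cons, Matrix.cons_val_two, Matrix.tail_cons] at hcon
    have hcc' : c * c' ≠ 0 := mul_ne_zero hc hc'
    have hfac : c * c' * (1 + z.2 * w.1 + z.1 * w.2) = 0 := by linear_combination hcon
    have hzero : 1 + z.2 * w.1 + z.1 * w.2 = 0 := by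
      rcases mul_eq_zero.mp hfac with h | h
      · exact absurd h hcc'
      · exact h
    have hB : z.1 * w.2 + z.2 * w.1 = 1 := by
      linear_combination -hzero + (z.1 * w.2 + z.2 * w.1) * h2
    exact ERAux.conj_core h2 ha hHV hz hw hB
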